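/- For every nonnegative integer n, 2n+1 divides C(3n, n), i.e., c_n = (1/(2n+1)) * C(3n, n) is an integer. -/
import Mathlib

theorem stmt_9 (n : ℕ) : (2 * n + 1) ∣ Nat.choose (3 * n) n := by
  rcases n with _ | m
  · simp
  set n := m + 1 with hn
  have key : n * Nat.choose (3 * n) n = (2 * n + 1) * Nat.choose (3 * n) m := by
    have h1 := Nat.add_one_mul_choose_eq (3 * m + 2) m
    have h2 := Nat.choose_mul_succ_eq (3 * m + 2) m
    have e1 : 3 * n = 3 * m + 2 + 1 := by omega
    have e2 : 3 * m + 2 + 1 - m = 2 * n + 1 := by omega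
    rw [e1]
    have h1' : (3 * m + 3) * Nat.choose (3 * m + 2) m
        = Nat.choose (3 * m + 2 + 1) (m + 1) * (m + 1) := by
      simpa [Nat.succ_eq_add_one] using h1
    rw [e2] at h2
    calc n * Nat.choose (3 * m + 2 + 1) n
        = Nat.choose (3 * m + 2 + 1) (m + 1) * (m + 1) := by rw [hn]; ring
      _ = (3 * m + 3) * Nat.choose (3 * m + 2) m := h1'.symm
      _ = Nat.choose (3 * m + 2) m * (3 * m + 2 + 1) := by ring
      _ = (2 * n + 1) * Nat.choose (3 * m + 2 + 1) m := by rw [h2]; ring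
  have hcop : Nat.Coprime (2 * n + 1) n := by
    have : Nat.Coprime (1 + 2 * n) n := Nat.coprime_add_mul_right_left 1 n 2 |>.mpr (Nat.coprime_one_left n)
    simpa [Nat.add_comm, two_mul, Nat.Coprime] using this
  exact hcop.dvd_of_dvd_mul_left ⟨Nat.choose (3 * n) m, key⟩
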